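/- Let A be an m × n complex matrix with nonzero singular values s_1 ≥ … ≥ s_p > 1/2 ≥ s_{p+1} ≥ … ≥ s_q, and let A = V Σ W* be a singular value decomposition. Define the partial isometry S_p = V (I_p ⊕ 0) W* (truncating to the top p singular directions). Then ‖A − S_p‖₂ ≤ ‖A − Y‖₂ for every m × n partial isometry Y, where ‖·‖₂ is the Frobenius (Hilbert–Schmidt) norm. -/

import Mathlib

open scoped Matrix
open Finset

namespace Stmt15Aux

lemma norm_sq_re_im (z : ℂ) : ‖z‖ ^ 2 = z.re ^ 2 + z.im ^ 2 := by
  rw [Complex.sq_norm, Complex.normSq_apply]; ring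

lemma conj_mul_re (z : ℂ) : ((starRingEnd ℂ) z * z).re = ‖z‖ ^ 2 := by
  rw [norm_sq_re_im]
  simp [Complex.mul_re, Complex.conj_re, Complex.conj_im]
  ring

lemma norm_ofReal_sq (r : ℝ) : ‖(r : ℂ)‖ ^ 2 = r ^ 2 := by
  rw [Complex.norm_real, Real.norm_eq_abs, sq_abs]

lemma norm_ofReal_sub_sq (r : ℝ) (z : ℂ) :
    ‖(r : ℂ) - z‖ ^ 2 = r ^ 2 - 2 * r * z.re + ‖z‖ ^ 2 := by
  rw [norm_sq_re_im, norm_sq_re_im z]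
  simp [Complex.sub_re, Complex.sub_im, Complex.ofReal_re, Complex.ofReal_im]
  ring

lemma frob_eq_trace {m n : ℕ} (M : Matrix (Fin m) (Fin n) ℂ) :
    ∑ i, ∑ j, ‖M i j‖ ^ 2 = (Matrix.trace (Mᴴ * M)).re := by
  have h : Matrix.trace (Mᴴ * M) = ∑ j, ∑ i, ((starRingEnd ℂ) (M i j) * M i j) := by
    simp [Matrix.trace, Matrix.diag, Matrix.mul_apply, Matrix.conjTranspose_apply]
  rw [h, Complex.re_sum, Finset.sum_comm]
  refine Finset.sum_congr rfl fun j _ => ?_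
  rw [Complex.re_sum]
  exact Finset.sum_congr rfl fun i _ => (conj_mul_re _).symm

lemma frob_conj {m n : ℕ} {V : Matrix (Fin m) (Fin m) ℂ} (hV : Vᴴ * V = 1)
    {W : Matrix (Fin n) (Fin n) ℂ} (hW : Wᴴ * W = 1) (M : Matrix (Fin m) (Fin n) ℂ) :
    ∑ i, ∑ j, ‖(V * M * Wᴴ) i j‖ ^ 2 = ∑ i, ∑ j, ‖M i j‖ ^ 2 := by
  rw [frob_eq_trace, frob_eq_trace]
  congr 1
  have h1 : (V * M * Wᴴ)ᴴ * (V * M * Wᴴ) = W * (Mᴴ * M) * Wᴴ := by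
    simp only [Matrix.conjTranspose_mul, Matrix.conjTranspose_conjTranspose]
    calc W * (Mᴴ * Vᴴ) * (V * M * Wᴴ) = W * (Mᴴ * ((Vᴴ * V) * (M * Wᴴ))) := by
          simp only [Matrix.mul_assoc]
      _ = W * (Mᴴ * M) * Wᴴ := by rw [hV, Matrix.one_mul]; simp only [Matrix.mul_assoc]
  rw [h1, Matrix.trace_mul_comm, ← Matrix.mul_assoc, hW, Matrix.one_mul]

lemma sum_ite_le {N : ℕ} (w : ℕ) (c : ℝ) (hc : 0 ≤ c) :
    (∑ j : Fin N, if w = (j : ℕ) then c else 0) ≤ c := by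
  by_cases h : w < N
  · have heq : (∑ j : Fin N, if w = (j : ℕ) then c else 0) = c := by
      rw [Finset.sum_eq_single (⟨w, h⟩ : Fin N)]
      · simp
      · intro b _ hb
        rw [if_neg]
        intro hb'
        exact hb (Fin.ext hb'.symm)
      · simp
    simp [heq]
  · have hz : ∀ j : Fin N, (if w = (j : ℕ) then c else 0) = 0 := by
      intro j; rw [if_neg]; rintro rfl; exact h j.isLt
    rw [Finset.sum_eq_zero fun j _ => hz j]
    exact hc

lemma sum_ite_le' {N : ℕ} (w : ℕ) (c : ℝ) (hc : 0 ≤ c) :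
    (∑ j : Fin N, if (j : ℕ) = w then c else 0) ≤ c := by
  have h : ∀ j : Fin N, (if (j : ℕ) = w then c else 0) = (if w = (j : ℕ) then c else 0) :=
    fun j => by simp [eq_comm]
  rw [Finset.sum_congr rfl fun j _ => h j]
  exact sum_ite_le w c hc

open scoped ComplexOrder in
lemma core {m n : ℕ} (s : ℕ → ℝ) (hs0 : ∀ i, 0 ≤ s i) (p : ℕ)
    (hp : ∀ i < p, 1 / 2 < s i) (hp' : ∀ i, p ≤ i → s i ≤ 1 / 2)
    (B : Matrix (Fin m) (Fin n) ℂ) (hidem : (Bᴴ * B) * (Bᴴ * B) = Bᴴ * B) :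
    ∑ i : Fin m, ∑ j : Fin n,
        ‖(if (i : ℕ) = (j : ℕ) then (Complex.ofReal (s (i : ℕ))) else 0) -
          (if (i : ℕ) = (j : ℕ) ∧ (i : ℕ) < p then (1 : ℂ) else 0)‖ ^ 2
      ≤ ∑ i : Fin m, ∑ j : Fin n,
        ‖(if (i : ℕ) = (j : ℕ) then (Complex.ofReal (s (i : ℕ))) else 0) - B i j‖ ^ 2 := by
  classical
  set P : Matrix (Fin n) (Fin n) ℂ := Bᴴ * B with hPdef
  have hPH : Pᴴ = P := by
    rw [hPdef, Matrix.conjTranspose_mul, Matrix.conjTranspose_conjTranspose]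
  -- B * P = B
  have hBP : B * P = B := by
    have a1 : P * Bᴴ * (B * P) = P := by
      rw [Matrix.mul_assoc P Bᴴ (B * P), ← Matrix.mul_assoc Bᴴ B P, ← hPdef, hidem, hidem]
    have a2 : P * Bᴴ * B = P := by
      rw [Matrix.mul_assoc, ← hPdef, hidem]
    have a3 : Bᴴ * (B * P) = P := by
      rw [← Matrix.mul_assoc, ← hPdef, hidem]
    have h0 : (B * P - B)ᴴ * (B * P - B) = 0 := by
      have hPB : (B * P - B)ᴴ = P * Bᴴ - Bᴴ := by
        rw [Matrix.conjTranspose_sub, Matrix.conjTranspose_mul, hPH]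
      rw [hPB, Matrix.sub_mul, Matrix.mul_sub, Matrix.mul_sub, a1, a2, a3, ← hPdef]
      simp
    have := Matrix.conjTranspose_mul_self_eq_zero.mp h0
    exact sub_eq_zero.mp this
  -- diagonal entries of P
  have hPjj : ∀ j, (P j j).re = ∑ i, ‖B i j‖ ^ 2 := by
    intro j
    have h : P j j = ∑ i, ((starRingEnd ℂ) (B i j) * B i j) := by
      rw [hPdef]
      simp [Matrix.mul_apply, Matrix.conjTranspose_apply]
    rw [h, Complex.re_sum]
    exact Finset.sum_congr rfl fun i _ => conj_mul_re _
  have hPjj0 : ∀ j, 0 ≤ (P j j).re := by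
    intro j; rw [hPjj]; exact Finset.sum_nonneg fun i _ => sq_nonneg _
  have hPjk : ∀ j k, P j k = (starRingEnd ℂ) (P k j) := by
    intro j k
    conv_lhs => rw [← hPH]
    rfl
  have hPjj2 : ∀ j, (P j j).re = ∑ k, ‖P k j‖ ^ 2 := by
    intro j
    have h : P j j = ∑ k, ((starRingEnd ℂ) (P k j) * P k j) := by
      conv_lhs => rw [← hidem]
      rw [Matrix.mul_apply]
      exact Finset.sum_congr rfl fun k _ => by rw [hPjk j k]
    rw [h, Complex.re_sum]
    exact Finset.sum_congr rfl fun k _ => conj_mul_re _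
  have hPjj1 : ∀ j, (P j j).re ≤ 1 := by
    intro j
    have h1 := hPjj2 j
    have h2 : ‖P j j‖ ^ 2 ≤ ∑ k, ‖P k j‖ ^ 2 :=
      Finset.single_le_sum (fun k _ => sq_nonneg ‖P k j‖) (Finset.mem_univ j)
    have h3 : ((P j j).re) ^ 2 ≤ ‖P j j‖ ^ 2 := by
      rw [norm_sq_re_im]; nlinarith [sq_nonneg (P j j).im]
    nlinarith [hPjj0 j, sq_nonneg ((P j j).re - 1)]
  have hB1 : ∀ (i : Fin m) (j : Fin n), ‖B i j‖ ≤ 1 := by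
    intro i j
    have h1 : ‖B i j‖ ^ 2 ≤ (P j j).re := by
      rw [hPjj]
      exact Finset.single_le_sum (fun k _ => sq_nonneg ‖B k j‖) (Finset.mem_univ i)
    nlinarith [norm_nonneg (B i j), hPjj1 j, sq_nonneg (‖B i j‖ - 1)]
  set t : ℝ := ∑ i : Fin m, ∑ j : Fin n, ‖B i j‖ ^ 2 with htdef
  have ht0 : 0 ≤ t := by
    rw [htdef]; positivity
  have htP : ∑ j, (P j j).re = t := by
    rw [htdef]
    rw [Finset.sum_congr rfl fun j (_ : j ∈ Finset.univ) => hPjj j]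
    exact Finset.sum_comm
  -- the diagonal sum bound  N ≤ t
  set N : ℝ := ∑ i : Fin m, ∑ j : Fin n, (if (i : ℕ) = (j : ℕ) then ‖B i j‖ else 0) with hNdef
  have hN0 : 0 ≤ N := by
    rw [hNdef]
    refine Finset.sum_nonneg fun i _ => Finset.sum_nonneg fun j _ => ?_
    split <;> simp [norm_nonneg]
  have hN_le : N ≤ t := by
    set F : Fin m × Fin n × Fin n → ℝ :=
      fun z => if (z.1 : ℕ) = (z.2.1 : ℕ) then ‖B z.1 z.2.2‖ else 0 with hFdef
    set G : Fin m × Fin n × Fin n → ℝ :=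
      fun z => if (z.1 : ℕ) = (z.2.1 : ℕ) then ‖P z.2.2 z.2.1‖ else 0 with hGdef
    have hF0 : ∀ z, 0 ≤ F z := by
      intro z; rw [hFdef]; dsimp only; split <;> simp [norm_nonneg]
    have hG0 : ∀ z, 0 ≤ G z := by
      intro z; rw [hGdef]; dsimp only; split <;> simp [norm_nonneg]
    have hNX : N ≤ ∑ z : Fin m × Fin n × Fin n, F z * G z := by
      rw [hNdef, Fintype.sum_prod_type]
      refine Finset.sum_le_sum fun i _ => ?_
      rw [Fintype.sum_prod_type]
      refine Finset.sum_le_sum fun j _ => ?_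
      rw [hFdef, hGdef]
      dsimp only
      by_cases hd : (i : ℕ) = (j : ℕ)
      · simp only [hd, if_true, if_pos]
        calc ‖B i j‖ = ‖(B * P) i j‖ := by rw [hBP]
          _ = ‖∑ k, B i k * P k j‖ := by rw [Matrix.mul_apply]
          _ ≤ ∑ k, ‖B i k * P k j‖ := norm_sum_le _ _
          _ = ∑ k, ‖B i k‖ * ‖P k j‖ :=
              Finset.sum_congr rfl fun k _ => norm_mul _ _
      · simp [hd]
    have hFsq : ∑ z : Fin m × Fin n × Fin n, F z ^ 2 ≤ t := by
      rw [hFdef, Fintype.sum_prod_type, htdef]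
      refine Finset.sum_le_sum fun i _ => ?_
      rw [Fintype.sum_prod_type]
      dsimp only
      rw [Finset.sum_comm]
      refine Finset.sum_le_sum fun k _ => ?_
      have h : ∀ j : Fin n, (if (i : ℕ) = (j : ℕ) then ‖B i k‖ else 0) ^ 2
          = (if (i : ℕ) = (j : ℕ) then ‖B i k‖ ^ 2 else 0) := by
        intro j; split <;> simp
      rw [Finset.sum_congr rfl fun j _ => h j]
      exact sum_ite_le _ _ (sq_nonneg _)
    have hGsq : ∑ z : Fin m × Fin n × Fin n, G z ^ 2 ≤ t := by
      rw [hGdef, Fintype.sum_prod_type]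
      dsimp only
      rw [Finset.sum_comm]
      calc ∑ z : Fin n × Fin n, ∑ i : Fin m,
            ((if (i : ℕ) = (z.1 : ℕ) then ‖P z.2 z.1‖ else 0) ^ 2)
          ≤ ∑ z : Fin n × Fin n, ‖P z.2 z.1‖ ^ 2 := by
            refine Finset.sum_le_sum fun z _ => ?_
            have h : ∀ i : Fin m, (if (i : ℕ) = (z.1 : ℕ) then ‖P z.2 z.1‖ else 0) ^ 2
                = (if (i : ℕ) = (z.1 : ℕ) then ‖P z.2 z.1‖ ^ 2 else 0) := by
              intro i; split <;> simp
            rw [Finset.sum_congr rfl fun i _ => h i]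
            exact sum_ite_le' _ _ (sq_nonneg _)
        _ = ∑ j : Fin n, ∑ k : Fin n, ‖P k j‖ ^ 2 := by
            rw [Fintype.sum_prod_type]
        _ = ∑ j, (P j j).re :=
            Finset.sum_congr rfl fun j _ => (hPjj2 j).symm
        _ = t := htP
    have hCS := Finset.sum_mul_sq_le_sq_mul_sq Finset.univ F G
    have hFG0 : 0 ≤ ∑ z : Fin m × Fin n × Fin n, F z * G z :=
      Finset.sum_nonneg fun z _ => mul_nonneg (hF0 z) (hG0 z)
    have hFsq0 : 0 ≤ ∑ z : Fin m × Fin n × Fin n, F z ^ 2 :=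
      Finset.sum_nonneg fun z _ => sq_nonneg _
    have hGsq0 : 0 ≤ ∑ z : Fin m × Fin n × Fin n, G z ^ 2 :=
      Finset.sum_nonneg fun z _ => sq_nonneg _
    nlinarith [hNX, hCS, hFsq, hGsq, hFG0, hFsq0, hGsq0, ht0, hN0]
  -- assemble
  set S2 : ℝ := ∑ i : Fin m, ∑ j : Fin n,
    (if (i : ℕ) = (j : ℕ) then (s (i : ℕ)) ^ 2 else 0) with hS2
  set Q : ℝ := ∑ i : Fin m, ∑ j : Fin n,
    (if (i : ℕ) = (j : ℕ) ∧ (i : ℕ) < p then 2 * s (i : ℕ) - 1 else 0) with hQ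
  set R : ℝ := ∑ i : Fin m, ∑ j : Fin n,
    (if (i : ℕ) = (j : ℕ) then s (i : ℕ) * (B i j).re else 0) with hR
  set R' : ℝ := ∑ i : Fin m, ∑ j : Fin n,
    (if (i : ℕ) = (j : ℕ) then s (i : ℕ) * ‖B i j‖ else 0) with hR'
  have idL : ∑ i : Fin m, ∑ j : Fin n,
      ‖(if (i : ℕ) = (j : ℕ) then (Complex.ofReal (s (i : ℕ))) else 0) -
        (if (i : ℕ) = (j : ℕ) ∧ (i : ℕ) < p then (1 : ℂ) else 0)‖ ^ 2 = S2 - Q := by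
    rw [hS2, hQ, ← Finset.sum_sub_distrib]
    refine Finset.sum_congr rfl fun i _ => ?_
    rw [← Finset.sum_sub_distrib]
    refine Finset.sum_congr rfl fun j _ => ?_
    by_cases hd : (i : ℕ) = (j : ℕ)
    · by_cases hip : (i : ℕ) < p
      · rw [if_pos hd, if_pos ⟨hd, hip⟩, if_pos hd, if_pos ⟨hd, hip⟩]
        have e : (Complex.ofReal (s (i : ℕ))) - 1 = Complex.ofReal (s (i : ℕ) - 1) := by
          push_cast; ring
        rw [e, norm_ofReal_sq]; ring
      · rw [if_pos hd, if_neg (fun h => hip h.2), if_pos hd, if_neg (fun h => hip h.2),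
          sub_zero, sub_zero, norm_ofReal_sq]
    · rw [if_neg hd, if_neg (fun h => hd h.1), if_neg hd, if_neg (fun h => hd h.1)]
      simp
  have idR : ∑ i : Fin m, ∑ j : Fin n,
      ‖(if (i : ℕ) = (j : ℕ) then (Complex.ofReal (s (i : ℕ))) else 0) - B i j‖ ^ 2
      = S2 - 2 * R + t := by
    have hptw : ∀ (i : Fin m) (j : Fin n),
        ‖(if (i : ℕ) = (j : ℕ) then (Complex.ofReal (s (i : ℕ))) else 0) - B i j‖ ^ 2
        = ((if (i : ℕ) = (j : ℕ) then (s (i : ℕ)) ^ 2 else 0)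
            - 2 * (if (i : ℕ) = (j : ℕ) then s (i : ℕ) * (B i j).re else 0))
          + ‖B i j‖ ^ 2 := by
      intro i j
      by_cases hd : (i : ℕ) = (j : ℕ)
      · rw [if_pos hd, if_pos hd, if_pos hd, norm_ofReal_sub_sq]; ring
      · rw [if_neg hd, if_neg hd, if_neg hd, zero_sub, norm_neg]; ring
    rw [Finset.sum_congr rfl fun i _ => Finset.sum_congr rfl fun j _ => hptw i j]
    rw [hS2, hR, htdef]
    simp only [Finset.sum_add_distrib, Finset.sum_sub_distrib, ← Finset.mul_sum]
  have E1 : R ≤ R' := by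
    rw [hR, hR']
    refine Finset.sum_le_sum fun i _ => Finset.sum_le_sum fun j _ => ?_
    by_cases hd : (i : ℕ) = (j : ℕ)
    · rw [if_pos hd, if_pos hd]
      have hre : (B i j).re ≤ ‖B i j‖ := by
        exact Complex.re_le_norm _
      exact mul_le_mul_of_nonneg_left hre (hs0 _)
    · rw [if_neg hd, if_neg hd]
  have E2' : ∑ i : Fin m, ∑ j : Fin n,
      (if (i : ℕ) = (j : ℕ) then (2 * s (i : ℕ) - 1) * ‖B i j‖ else 0) = 2 * R' - N := by
    have hptw : ∀ (i : Fin m) (j : Fin n),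
        (if (i : ℕ) = (j : ℕ) then (2 * s (i : ℕ) - 1) * ‖B i j‖ else 0)
        = 2 * (if (i : ℕ) = (j : ℕ) then s (i : ℕ) * ‖B i j‖ else 0)
          - (if (i : ℕ) = (j : ℕ) then ‖B i j‖ else 0) := by
      intro i j
      by_cases hd : (i : ℕ) = (j : ℕ)
      · rw [if_pos hd, if_pos hd, if_pos hd]; ring
      · rw [if_neg hd, if_neg hd, if_neg hd]; ring
    rw [Finset.sum_congr rfl fun i _ => Finset.sum_congr rfl fun j _ => hptw i j]
    rw [hR', hNdef]
    simp only [Finset.sum_sub_distrib, ← Finset.mul_sum]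
  have E2 : ∑ i : Fin m, ∑ j : Fin n,
      (if (i : ℕ) = (j : ℕ) then (2 * s (i : ℕ) - 1) * ‖B i j‖ else 0) ≤ Q := by
    rw [hQ]
    refine Finset.sum_le_sum fun i _ => Finset.sum_le_sum fun j _ => ?_
    by_cases hd : (i : ℕ) = (j : ℕ)
    · by_cases hip : (i : ℕ) < p
      · rw [if_pos hd, if_pos ⟨hd, hip⟩]
        have h2s : 0 ≤ 2 * s (i : ℕ) - 1 := by
          have := hp _ hip; linarith
        exact mul_le_of_le_one_right h2s (hB1 i j)
      · rw [if_pos hd, if_neg (fun h => hip h.2)]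
        have hle := hp' (i : ℕ) (le_of_not_gt hip)
        nlinarith [norm_nonneg (B i j)]
    · rw [if_neg hd, if_neg (fun h => hd h.1)]
  linarith [idL, idR, E1, E2, E2', hN_le]

end Stmt15Aux

/-- Finite-dimensional best approximation by partial isometries (Frobenius norm):
if `A = V Σ Wᴴ` is a singular value decomposition of an `m × n` matrix whose nonzero
singular values satisfy `s 0 ≥ … ≥ s (p-1) > 1/2 ≥ s p ≥ …`, then the partial isometry
`S_p = V (I_p ⊕ 0) Wᴴ`, obtained by truncating to the top `p` singular directions,
satisfies `‖A - S_p‖₂ ≤ ‖A - Y‖₂` for every `m × n` partial isometry `Y`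
(stated with squared Frobenius norms). -/
theorem stmt_15 (m n : ℕ) (A : Matrix (Fin m) (Fin n) ℂ)
    (V : Matrix (Fin m) (Fin m) ℂ) (hV : V ∈ Matrix.unitaryGroup (Fin m) ℂ)
    (W : Matrix (Fin n) (Fin n) ℂ) (hW : W ∈ Matrix.unitaryGroup (Fin n) ℂ)
    (s : ℕ → ℝ) (hs0 : ∀ i, 0 ≤ s i) (hsanti : Antitone s)
    (p : ℕ) (hp : ∀ i < p, 1 / 2 < s i) (hp' : ∀ i, p ≤ i → s i ≤ 1 / 2)
    (hA : A = V * Matrix.of (fun (i : Fin m) (j : Fin n) =>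
      if i.val = j.val then Complex.ofReal (s i.val) else 0) * Wᴴ)
    (Sp : Matrix (Fin m) (Fin n) ℂ)
    (hSp : Sp = V * Matrix.of (fun (i : Fin m) (j : Fin n) =>
      if i.val = j.val ∧ i.val < p then (1 : ℂ) else 0) * Wᴴ)
    (Y : Matrix (Fin m) (Fin n) ℂ) (hY : IsIdempotentElem (Yᴴ * Y)) :
    ∑ i, ∑ j, ‖(A - Sp) i j‖ ^ 2 ≤ ∑ i, ∑ j, ‖(A - Y) i j‖ ^ 2 := by
  have hV1 : Vᴴ * V = 1 := by
    have := hV.1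
    rwa [Matrix.star_eq_conjTranspose] at this
  have hV2 : V * Vᴴ = 1 := by
    have := hV.2
    rwa [Matrix.star_eq_conjTranspose] at this
  have hW1 : Wᴴ * W = 1 := by
    have := hW.1
    rwa [Matrix.star_eq_conjTranspose] at this
  have hW2 : W * Wᴴ = 1 := by
    have := hW.2
    rwa [Matrix.star_eq_conjTranspose] at this
  set Sig : Matrix (Fin m) (Fin n) ℂ := Matrix.of (fun (i : Fin m) (j : Fin n) =>
    if i.val = j.val then Complex.ofReal (s i.val) else 0) with hSig
  set T : Matrix (Fin m) (Fin n) ℂ := Matrix.of (fun (i : Fin m) (j : Fin n) =>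
    if i.val = j.val ∧ i.val < p then (1 : ℂ) else 0) with hT
  set B : Matrix (Fin m) (Fin n) ℂ := Vᴴ * Y * W with hB
  have hYB : V * B * Wᴴ = Y := by
    rw [hB]
    calc V * (Vᴴ * Y * W) * Wᴴ = (V * Vᴴ) * (Y * (W * Wᴴ)) := by
          simp only [Matrix.mul_assoc]
      _ = Y := by rw [hV2, hW2, Matrix.one_mul, Matrix.mul_one]
  have h1 : A - Y = V * (Sig - B) * Wᴴ := by
    rw [hA, ← hYB, Matrix.mul_sub, Matrix.sub_mul]
  have h2 : A - Sp = V * (Sig - T) * Wᴴ := by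
    rw [hA, hSp, Matrix.mul_sub, Matrix.sub_mul]
  rw [h1, h2, Stmt15Aux.frob_conj hV1 hW1, Stmt15Aux.frob_conj hV1 hW1]
  have hidem : (Bᴴ * B) * (Bᴴ * B) = Bᴴ * B := by
    have hBB : Bᴴ * B = Wᴴ * (Yᴴ * Y) * W := by
      rw [hB]
      simp only [Matrix.conjTranspose_mul, Matrix.conjTranspose_conjTranspose]
      calc Wᴴ * (Yᴴ * V) * (Vᴴ * Y * W) = Wᴴ * (Yᴴ * ((V * Vᴴ) * (Y * W))) := by
            simp only [Matrix.mul_assoc]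
        _ = Wᴴ * (Yᴴ * Y) * W := by rw [hV2, Matrix.one_mul]; simp only [Matrix.mul_assoc]
    rw [hBB]
    have hYY : (Yᴴ * Y) * (Yᴴ * Y) = Yᴴ * Y := hY
    calc (Wᴴ * (Yᴴ * Y) * W) * (Wᴴ * (Yᴴ * Y) * W)
        = Wᴴ * ((Yᴴ * Y) * ((W * Wᴴ) * ((Yᴴ * Y) * W))) := by
          simp only [Matrix.mul_assoc]
      _ = Wᴴ * ((Yᴴ * Y) * ((Yᴴ * Y) * W)) := by rw [hW2, Matrix.one_mul]
      _ = Wᴴ * (((Yᴴ * Y) * (Yᴴ * Y)) * W) := by simp only [Matrix.mul_assoc]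
      _ = Wᴴ * (Yᴴ * Y) * W := by rw [hYY]; simp only [Matrix.mul_assoc]
  have := Stmt15Aux.core s hs0 p hp hp' B hidem
  simpa only [Matrix.sub_apply, Matrix.of_apply, hSig, hT] using this
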